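/- Let A_0 = A(a,α) be an n×m asymmetric Toeplitz matrix with zero diagonal, and B_0 = A(b,β) an m×l asymmetric Toeplitz matrix with zero diagonal, where max(n,l) ≤ m. Then the displacement of their product satisfies Δ(A_0 B_0) = A_0 b ⊗ ζ_0 + a ⊗ β + e_0 ⊗ (S_l B_0* S_m* α) − α̂_{(m,n)} ⊗ b̂_{(m,l)}, where α̂_{(m,n)} = (0, ᾱ_{m-1}, ..., ᾱ_{m-n+1}) ∈ C^n and b̂_{(m,l)} = (0, b̄_{m-1}, ..., b̄_{m-l+1}) ∈ C^l. -/

import Mathlib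

open Matrix BigOperators

/-- Lower shift matrix: 1's on the subdiagonal. -/
noncomputable def Sh (n : ℕ) : Matrix (Fin n) (Fin n) ℂ :=
  Matrix.of fun i j => if (i : ℕ) = (j : ℕ) + 1 then 1 else 0

/-- Rectangular identity matrix. -/
noncomputable def rId (n m : ℕ) : Matrix (Fin n) (Fin m) ℂ :=
  Matrix.of fun i j => if (i : ℕ) = (j : ℕ) then 1 else 0

/-- Reversal (flip) permutation matrix. -/
noncomputable def rev (n : ℕ) : Matrix (Fin n) (Fin n) ℂ :=
  Matrix.of fun i j => if (i : ℕ) + (j : ℕ) = n - 1 then 1 else 0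

/-- Rank-one tensor x ⊗ y = x ȳᵀ. -/
noncomputable def oprod {n m : ℕ} (x : Fin n → ℂ) (y : Fin m → ℂ) : Matrix (Fin n) (Fin m) ℂ :=
  Matrix.of fun i j => x i * star (y j)

/-- Displacement ΔA = A - Sₙ A Sₘ*. -/
noncomputable def dsp {n m : ℕ} (A : Matrix (Fin n) (Fin m) ℂ) : Matrix (Fin n) (Fin m) ℂ :=
  A - Sh n * A * (Sh m)ᴴ

/-- Asymmetric Toeplitz: constant along diagonals. -/
noncomputable def IsAT {n m : ℕ} (A : Matrix (Fin n) (Fin m) ℂ) : Prop :=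
  ∀ (i : Fin n) (j : Fin m) (hi : (i : ℕ) + 1 < n) (hj : (j : ℕ) + 1 < m),
    A ⟨(i : ℕ) + 1, hi⟩ ⟨(j : ℕ) + 1, hj⟩ = A i j

/-- Asymmetric Hankel: constant along antidiagonals. -/
noncomputable def IsAH {n m : ℕ} (A : Matrix (Fin n) (Fin m) ℂ) : Prop :=
  ∀ (i : Fin n) (j : Fin m) (hi : (i : ℕ) + 1 < n) (hj : (j : ℕ) + 1 < m),
    A ⟨(i : ℕ) + 1, hi⟩ j = A i ⟨(j : ℕ) + 1, hj⟩

/-- The asymmetric Toeplitz matrix A(a,α) with zero diagonal. -/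
noncomputable def aT {n m : ℕ} (a : Fin n → ℂ) (α : Fin m → ℂ) : Matrix (Fin n) (Fin m) ℂ :=
  Matrix.of fun i j =>
    if (j : ℕ) < (i : ℕ) then
      a ⟨(i : ℕ) - (j : ℕ), lt_of_le_of_lt (Nat.sub_le _ _) i.isLt⟩
    else if (i : ℕ) < (j : ℕ) then
      star (α ⟨(j : ℕ) - (i : ℕ), lt_of_le_of_lt (Nat.sub_le _ _) j.isLt⟩)
    else 0

lemma Sh_mul_apply {n m : ℕ} (M : Matrix (Fin n) (Fin m) ℂ) (i : Fin n) (j : Fin m) :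
    (Sh n * M) i j = if h : 0 < (i : ℕ) then M ⟨(i : ℕ) - 1, by omega⟩ j else 0 := by
  rw [Matrix.mul_apply]
  split_ifs with h
  · rw [Finset.sum_eq_single (⟨(i : ℕ) - 1, by omega⟩ : Fin n)]
    · simp only [Sh, of_apply]
      rw [if_pos (by omega), one_mul]
    · intro p _ hp
      simp only [Sh, of_apply]
      rw [if_neg (fun hc => hp (Fin.ext (show _ = _ - 1 by omega))), zero_mul]
    · simp
  · apply Finset.sum_eq_zero; intro p _
    simp only [Sh, of_apply]
    rw [if_neg (by omega), zero_mul]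

lemma mul_ShH_apply {n m : ℕ} (M : Matrix (Fin n) (Fin m) ℂ) (i : Fin n) (j : Fin m) :
    (M * (Sh m)ᴴ) i j = if h : 0 < (j : ℕ) then M i ⟨(j : ℕ) - 1, by omega⟩ else 0 := by
  rw [Matrix.mul_apply]
  split_ifs with h
  · rw [Finset.sum_eq_single (⟨(j : ℕ) - 1, by omega⟩ : Fin m)]
    · simp only [Sh, conjTranspose_apply, of_apply]
      rw [if_pos (by omega)]
      simp
    · intro p _ hp
      simp only [Sh, conjTranspose_apply, of_apply]
      rw [if_neg (fun hc => hp (Fin.ext (show _ = _ - 1 by omega)))]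
      simp
    · simp
  · apply Finset.sum_eq_zero; intro p _
    simp only [Sh, conjTranspose_apply, of_apply]
    rw [if_neg (by omega)]
    simp

lemma aT_succ {n m : ℕ} (a : Fin n → ℂ) (α : Fin m → ℂ) (i j : ℕ) (hi : i + 1 < n) (hj : j + 1 < m) :
    aT a α ⟨i + 1, hi⟩ ⟨j + 1, hj⟩ = aT a α ⟨i, by omega⟩ ⟨j, by omega⟩ := by
  simp [aT, Nat.succ_sub_succ, Nat.add_lt_add_iff_right]

lemma aT_upper {n m : ℕ} (a : Fin n → ℂ) (α : Fin m → ℂ) (i : Fin n) (j : Fin m)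
    (h : (i : ℕ) < (j : ℕ)) :
    aT a α i j = star (α ⟨(j : ℕ) - (i : ℕ), lt_of_le_of_lt (Nat.sub_le _ _) j.isLt⟩) := by
  simp only [aT, of_apply]
  rw [if_neg (by omega), if_pos h]

lemma aT_lower {n m : ℕ} (a : Fin n → ℂ) (α : Fin m → ℂ) (i : Fin n) (j : Fin m)
    (h : (j : ℕ) < (i : ℕ)) :
    aT a α i j = a ⟨(i : ℕ) - (j : ℕ), lt_of_le_of_lt (Nat.sub_le _ _) i.isLt⟩ := by
  simp only [aT, of_apply]
  rw [if_pos h]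

lemma aT_col0 {n m : ℕ} (hm : 0 < m) (a : Fin n → ℂ) (α : Fin m → ℂ) (i : Fin n)
    (ha : a ⟨0, i.pos⟩ = 0) : aT a α i ⟨0, hm⟩ = a i := by
  rcases Nat.eq_zero_or_pos (i : ℕ) with h | h
  · have hi : i = ⟨0, i.pos⟩ := Fin.ext h
    rw [hi, ha]
    simp [aT]
  · rw [aT_lower a α i ⟨0, hm⟩ h]
    congr 1

lemma aT_row0 {n m : ℕ} (hn : 0 < n) (a : Fin n → ℂ) (α : Fin m → ℂ) (j : Fin m)
    (hα : α ⟨0, j.pos⟩ = 0) : aT a α ⟨0, hn⟩ j = star (α j) := by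
  rcases Nat.eq_zero_or_pos (j : ℕ) with h | h
  · have hj : j = ⟨0, j.pos⟩ := Fin.ext h
    rw [hj, hα, star_zero]
    simp [aT]
  · rw [aT_upper a α ⟨0, hn⟩ j h]
    congr 2

lemma aT_congr {n m : ℕ} (a : Fin n → ℂ) (α : Fin m → ℂ) {i i' : Fin n} {j j' : Fin m}
    (hij : (i : ℕ) = (i' : ℕ)) (hj : (j : ℕ) = (j' : ℕ)) : aT a α i j = aT a α i' j' := by
  rw [show i = i' from Fin.ext hij, show j = j' from Fin.ext hj]

theorem stmt19 {n m l : ℕ} (hn : 0 < n) (hl : 0 < l) (hnm : n ≤ m) (hlm : l ≤ m)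
    (a : Fin n → ℂ) (α : Fin m → ℂ) (b : Fin m → ℂ) (β : Fin l → ℂ)
    (ha : a ⟨0, hn⟩ = 0) (hα : α ⟨0, hn.trans_le hnm⟩ = 0)
    (hb : b ⟨0, hn.trans_le hnm⟩ = 0) (hβ : β ⟨0, hl⟩ = 0) :
    dsp (aT a α * aT b β) =
      oprod ((aT a α).mulVec b) (Pi.single (⟨0, hl⟩ : Fin l) 1) +
      oprod a β +
      oprod (Pi.single (⟨0, hn⟩ : Fin n) 1) ((Sh l * (aT b β)ᴴ * (Sh m)ᴴ).mulVec α) -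
      oprod (fun i : Fin n => if h : (i : ℕ) = 0 then 0
          else star (α ⟨m - (i : ℕ), Nat.sub_lt (hn.trans_le hnm) (Nat.pos_of_ne_zero h)⟩)) (fun j : Fin l => if h : (j : ℕ) = 0 then 0
          else star (b ⟨m - (j : ℕ), Nat.sub_lt (hn.trans_le hnm) (Nat.pos_of_ne_zero h)⟩)) := by
  have hm : 0 < m := hn.trans_le hnm
  ext i j
  simp only [dsp, Matrix.sub_apply, Matrix.add_apply, oprod, of_apply, Matrix.mulVec,
    dotProduct, mul_ShH_apply, Sh_mul_apply, conjTranspose_apply]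
  obtain ⟨j, hj⟩ := j
  obtain ⟨i, hi⟩ := i
  rcases Nat.eq_zero_or_pos j with rfl | hj0
  · rw [dif_neg (by simp)]
    have h1 : Pi.single (M := fun _ => ℂ) (⟨0, hl⟩ : Fin l) 1 ⟨0, hj⟩ = 1 := by
      have he : (⟨0, hj⟩ : Fin l) = ⟨0, hl⟩ := rfl
      rw [he, Pi.single_eq_same]
    have hβ0 : β ⟨0, hj⟩ = 0 := hβ
    have h5 : (∑ q : Fin m, (if _ : 0 < (q : ℕ) then
        (if _ : 0 < ((⟨0, hj⟩ : Fin l) : ℕ) then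
          star (aT b β ⟨(q : ℕ) - 1, by omega⟩ ⟨((⟨0, hj⟩ : Fin l) : ℕ) - 1, by omega⟩)
        else 0) else 0) * α q) = 0 := by
      apply Finset.sum_eq_zero
      intro q _
      rcases Nat.eq_zero_or_pos (q : ℕ) with h | h
      · rw [dif_neg (by omega), zero_mul]
      · rw [dif_pos h, dif_neg (by simp), zero_mul]
    rw [h1, hβ0, h5, dif_pos rfl]
    simp only [star_zero, star_one, mul_one, mul_zero, add_zero, sub_zero]
    rw [Matrix.mul_apply]
    exact Finset.sum_congr rfl fun k _ => by rw [aT_col0 hj b β k hb]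
  · -- 0 < j
    rw [dif_pos hj0]
    have h1 : Pi.single (M := fun _ => ℂ) (⟨0, hl⟩ : Fin l) 1 ⟨j, hj⟩ = 0 :=
      Pi.single_eq_of_ne (by simp [Fin.ext_iff]; omega) _
    rw [h1, star_zero, mul_zero, zero_add]
    rw [dif_neg (show ¬ j = 0 by omega), star_star]
    rcases Nat.eq_zero_or_pos i with rfl | hi0
    · -- i = 0
      rw [dif_neg (by simp), sub_zero]
      rw [dif_pos rfl, zero_mul, sub_zero]
      have h2 : Pi.single (M := fun _ => ℂ) (⟨0, hn⟩ : Fin n) 1 ⟨0, hi⟩ = 1 := by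
        have he : (⟨0, hi⟩ : Fin n) = ⟨0, hn⟩ := rfl
        rw [he, Pi.single_eq_same]
      rw [h2, one_mul, show a ⟨0, hi⟩ = 0 from ha, zero_mul, zero_add]
      rw [Matrix.mul_apply, star_sum]
      refine Finset.sum_congr rfl fun q _ => ?_
      rw [star_mul']
      rw [aT_row0 hi a α q hα]
      rcases Nat.eq_zero_or_pos (q : ℕ) with hq | hq
      · rw [dif_neg (by omega), star_zero, zero_mul]
        rw [show q = ⟨0, hm⟩ from Fin.ext hq, hα, star_zero, zero_mul]
      · rw [dif_pos hq, dif_pos hj0, star_star, mul_comm]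
        congr 1
        exact ((aT_succ b β ((q : ℕ) - 1) (j - 1) (by omega) (by omega)).symm.trans
          (aT_congr b β (i' := q) (j' := ⟨j, hj⟩) (show (q : ℕ) - 1 + 1 = (q : ℕ) by omega)
            (show j - 1 + 1 = j by omega))).symm
    · -- 0 < i
      rw [dif_pos hi0]
      have h2 : Pi.single (M := fun _ => ℂ) (⟨0, hn⟩ : Fin n) 1 ⟨i, hi⟩ = 0 :=
        Pi.single_eq_of_ne (by simp [Fin.ext_iff]; omega) _
      rw [h2, zero_mul, add_zero]
      rw [dif_neg (show ¬ i = 0 by omega)]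
      obtain ⟨m', rfl⟩ : ∃ m', m = m' + 1 := ⟨m - 1, by omega⟩
      rw [Matrix.mul_apply, Matrix.mul_apply, Fin.sum_univ_succ, Fin.sum_univ_castSucc]
      have hsum : ∑ k : Fin m', aT a α ⟨i - 1, by omega⟩ (Fin.castSucc k) *
            aT b β (Fin.castSucc k) ⟨j - 1, by omega⟩ =
          ∑ k : Fin m', aT a α ⟨i, hi⟩ (Fin.succ k) * aT b β (Fin.succ k) ⟨j, hj⟩ := by
        refine Finset.sum_congr rfl fun k _ => ?_
        have e1 : aT a α ⟨i, hi⟩ (Fin.succ k) = aT a α ⟨i - 1, by omega⟩ (Fin.castSucc k) :=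
          (aT_congr a α (show i = i - 1 + 1 by omega) (Fin.val_succ k)).trans
            (aT_succ a α (i - 1) (k : ℕ) (by omega) (by omega))
        have e2 : aT b β (Fin.succ k) ⟨j, hj⟩ = aT b β (Fin.castSucc k) ⟨j - 1, by omega⟩ :=
          (aT_congr b β (Fin.val_succ k) (show j = j - 1 + 1 by omega)).trans
            (aT_succ b β (k : ℕ) (j - 1) (by omega) (by omega))
        rw [e1, e2]
      rw [hsum]
      have e3 : aT a α ⟨i, hi⟩ (0 : Fin (m' + 1)) = a ⟨i, hi⟩ :=
        aT_col0 (Nat.succ_pos m') a α _ ha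
      have e4 : aT b β (0 : Fin (m' + 1)) ⟨j, hj⟩ = star (β ⟨j, hj⟩) :=
        aT_row0 (Nat.succ_pos m') b β _ hβ
      have e5 : aT a α ⟨i - 1, by omega⟩ (Fin.last m') =
          star (α ⟨m' + 1 - i, by omega⟩) := by
        rw [aT_upper a α _ _ (show i - 1 < m' by omega)]
        exact congrArg (fun t => star (α t)) (Fin.ext (show m' - (i - 1) = m' + 1 - i by omega))
      have e6 : aT b β (Fin.last m') ⟨j - 1, by omega⟩ = b ⟨m' + 1 - j, by omega⟩ := by
        rw [aT_lower b β _ _ (show j - 1 < m' by omega)]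
        exact congrArg b (Fin.ext (show m' - (j - 1) = m' + 1 - j by omega))
      rw [e3, e4, e5, e6]
      ring
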